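/- For every computably enumerable language L ⊆ A* over a finite alphabet A, there exist a finitely generated decidable minimal presentation P = ⟨X ∥ R⟩, a constant C ≥ 1, and a computable injective map μ : A* → F(X) with |μ(u)| ≤ C·(|u| + 1) for every u ∈ A*, such that: (1) for every u ∈ A*, the word μ(u) is trivial in P if and only if u ∈ L; and (2) the word problem for P is solvable if and only if L is decidable. -/

import Mathlib

/-- The length of the reduced word representing an element of the free group. -/
noncomputable def wordLength {X : Type*} (w : FreeGroup X) : ℕ :=
  letI := Classical.decEq X
  (FreeGroup.toWord w).length

/-- The area of a word `w` with respect to a relator set `R`: the least `N` such that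
`w` is the product of `N` conjugates of elements of `R ∪ R⁻¹`. -/
noncomputable def Area {X : Type*} (R : Set (FreeGroup X)) (w : FreeGroup X) : ℕ :=
  sInf {N : ℕ | ∃ l : List (FreeGroup X), l.length = N ∧
    (∀ x ∈ l, ∃ r, (r ∈ R ∨ r⁻¹ ∈ R) ∧ ∃ g, x = g * r * g⁻¹) ∧ l.prod = w}

/-- The Dehn function of the presentation `⟨X ∥ R⟩`. -/
noncomputable def DehnFunction {X : Type*} (R : Set (FreeGroup X)) (n : ℕ) : ℕ :=
  sSup {a : ℕ | ∃ w ∈ Subgroup.normalClosure R, wordLength w ≤ n ∧ Area R w = a}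

/-- The presentation `⟨X ∥ R⟩` is decidable: membership in the relator set is decidable
(words in the free group being encoded as words in the letters). -/
def DecidableRelators {X : Type*} [Primcodable X] (R : Set (FreeGroup X)) : Prop :=
  ComputablePred fun l : List (X × Bool) => FreeGroup.mk l ∈ R

/-- The word problem for `⟨X ∥ R⟩` is solvable: the set of trivial words is decidable. -/
def WordProblemSolvable {X : Type*} [Primcodable X] (R : Set (FreeGroup X)) : Prop :=
  ComputablePred fun l : List (X × Bool) => FreeGroup.mk l ∈ Subgroup.normalClosure R

/-- The bounded word problem for `⟨X ∥ R⟩` is solvable: the set of pairs `(w, n)` with `w`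
trivial of area at most `n` is decidable. -/
def BoundedWordProblemSolvable {X : Type*} [Primcodable X] (R : Set (FreeGroup X)) : Prop :=
  ComputablePred fun p : List (X × Bool) × ℕ =>
    FreeGroup.mk p.1 ∈ Subgroup.normalClosure R ∧ Area R (FreeGroup.mk p.1) ≤ p.2

/-- A presentation `⟨X ∥ R⟩` is minimal if no proper subset of `R` has the same
normal closure as `R`. -/
def MinimalPresentation {X : Type*} (R : Set (FreeGroup X)) : Prop :=
  ∀ R' ⊆ R, Subgroup.normalClosure R' = Subgroup.normalClosure R → R' = R

/-- A predicate is computably enumerable (semi-decidable). -/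
def CEPred {α : Type*} [Primcodable α] (p : α → Prop) : Prop :=
  Partrec fun a => Part.assert (p a) fun _ => Part.some ()



open List in
/-- A list with no adjacent cancelling pair is its own reduction. -/
theorem reduce_eq_self_of_chain {α : Type*} [DecidableEq α] :
    ∀ (l : List (α × Bool)), l.Chain' (fun a b => ¬(a.1 = b.1 ∧ a.2 = !b.2)) →
      FreeGroup.reduce l = l := by
  intro l
  induction l with
  | nil => intro _; rfl
  | cons x l ih =>
    intro h
    have h2 := (List.isChain_cons.1 h).2
    have h1 := (List.isChain_cons.1 h).1
    rw [FreeGroup.reduce.cons, ih h2]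
    cases l with
    | nil => rfl
    | cons y t =>
      have : ¬(x.1 = y.1 ∧ x.2 = !y.2) := h1 y rfl
      simp only [this, if_false]

theorem mk_eq_mk_iff_of_reduced {α : Type*} [DecidableEq α] {l l' : List (α × Bool)}
    (h : FreeGroup.reduce l' = l') : FreeGroup.mk l = FreeGroup.mk l' ↔ FreeGroup.reduce l = l' := by
  constructor
  · intro he
    have := FreeGroup.reduce.sound (L₁ := l) (L₂ := l') he
    rw [h] at this; exact this
  · intro he
    exact FreeGroup.reduce.exact (by rw [he, h])

theorem wordLength_mk_le' {α : Type*} [DecidableEq α] (l : List (α × Bool)) :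
    ((FreeGroup.mk l).toWord).length ≤ l.length := FreeGroup.norm_mk_le

/-- `reduce` as a `foldr`. -/
theorem reduce_eq_foldr {α : Type*} [DecidableEq α] (l : List (α × Bool)) :
    FreeGroup.reduce l = l.foldr (fun x ih =>
      List.casesOn ih [x] fun hd tl =>
        if x.1 = hd.1 ∧ x.2 = !hd.2 then tl else x :: hd :: tl) [] := by
  induction l with
  | nil => rfl
  | cons x l ih => rw [FreeGroup.reduce.cons, ih]; rfl

theorem primrec_reduce {α : Type*} [Primcodable α] [DecidableEq α] :
    Primrec (FreeGroup.reduce : List (α × Bool) → List (α × Bool)) := by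
  have h : Primrec₂ (fun (_ : List (α × Bool)) (p : (α × Bool) × List (α × Bool)) =>
      (List.casesOn p.2 [p.1] fun hd tl =>
        if p.1.1 = hd.1 ∧ p.1.2 = !hd.2 then tl else p.1 :: hd :: tl : List (α × Bool))) := by
    apply Primrec.list_casesOn (f := fun p : List (α × Bool) × ((α × Bool) × List (α × Bool)) => p.2.2)
      (g := fun p => [p.2.1])
      (h := fun p q => if p.2.1.1 = q.1.1 ∧ p.2.1.2 = !q.1.2 then q.2 else p.2.1 :: q.1 :: q.2)
    · exact Primrec.snd.comp Primrec.snd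
    · exact (Primrec.list_cons.comp (Primrec.fst.comp Primrec.snd) (Primrec.const []))
    · apply Primrec.ite
      · apply PrimrecPred.and
        · exact Primrec.eq.comp (Primrec.fst.comp (Primrec.fst.comp (Primrec.snd.comp Primrec.fst)))
            (Primrec.fst.comp (Primrec.fst.comp Primrec.snd))
        · exact Primrec.eq.comp (Primrec.snd.comp (Primrec.fst.comp (Primrec.snd.comp Primrec.fst)))
            ((Primrec.cond (Primrec.snd.comp (Primrec.fst.comp Primrec.snd))
              (Primrec.const false) (Primrec.const true)))
      · exact Primrec.snd.comp Primrec.snd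
      · exact Primrec.list_cons.comp (Primrec.fst.comp (Primrec.snd.comp Primrec.fst))
          (Primrec.list_cons.comp (Primrec.fst.comp Primrec.snd) (Primrec.snd.comp Primrec.snd))
  have := Primrec.list_foldr (Primrec.id) (Primrec.const ([] : List (α × Bool))) h
  exact this.of_eq fun l => (reduce_eq_foldr l).symm

/-- Every function out of a finite primcodable type is primitive recursive. -/
theorem primrec_of_fintype {α β : Type*} [Primcodable α] [Fintype α] [DecidableEq α]
    [Primcodable β] [Inhabited β] (f : α → β) : Primrec f := by
  classical
  have h : Primrec (fun a : α =>
      ((Finset.univ.toList (α := α)).map f).getD ((Finset.univ.toList (α := α)).idxOf a)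
        (default : β)) :=
    (Primrec.list_getD (default : β)).comp (Primrec.const _)
      ((Primrec.list_idxOf (α := α)).comp Primrec.id (Primrec.const _))
  apply h.of_eq
  intro a
  have ha : a ∈ Finset.univ.toList (α := α) := by simp
  have hlt : (Finset.univ.toList (α := α)).idxOf a < (Finset.univ.toList (α := α)).length :=
    List.idxOf_lt_length_iff.2 ha
  rw [List.getD_eq_getElem _ _ (by simpa using hlt)]
  simp only [List.getElem_map]
  congr 1
  exact List.getElem_idxOf (by simpa using hlt)

theorem reduce_irrel {α : Type*} {i1 i2 : DecidableEq α} (l : List (α × Bool)) :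
    @FreeGroup.reduce α i1 l = @FreeGroup.reduce α i2 l := by
  have : i1 = i2 := Subsingleton.elim _ _
  rw [this]

theorem mk_inj_of_chain {α : Type*} {l l' : List (α × Bool)}
    (h : l.Chain' (fun a b => ¬(a.1 = b.1 ∧ a.2 = !b.2)))
    (h' : l'.Chain' (fun a b => ¬(a.1 = b.1 ∧ a.2 = !b.2)))
    (he : FreeGroup.mk l = FreeGroup.mk l') : l = l' := by
  classical
  have h1 := reduce_eq_self_of_chain l h
  have h2 := reduce_eq_self_of_chain l' h'
  have := FreeGroup.reduce.sound he
  rw [h1, h2] at this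
  exact this

section WordLemmas

variable {β : Type*}

/-- the no-cancellation relation -/
def nc (a b : β × Bool) : Prop := ¬(a.1 = b.1 ∧ a.2 = !b.2)

theorem nc_of_fst_ne {a b : β × Bool} (h : a.1 ≠ b.1) : nc a b := fun hc => h hc.1

theorem nc_of_snd_eq {a b : β × Bool} (h : a.2 = b.2) : nc a b := by
  rintro ⟨-, h2⟩; rw [h] at h2; exact (Bool.eq_not_self b.2).1 h2

theorem chain'_nc_of_snd_const {l : List (β × Bool)} (b : Bool) (h : ∀ x ∈ l, x.2 = b) :
    l.Chain' nc := by
  induction l with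
  | nil => exact List.isChain_nil
  | cons x t ih =>
    refine List.isChain_cons.2 ⟨fun y hy => ?_, ih fun y hy => h y (List.mem_cons_of_mem _ hy)⟩
    have hyt : y ∈ t := List.mem_of_mem_head? hy
    exact nc_of_snd_eq (by rw [h x (List.mem_cons_self), h y (List.mem_cons_of_mem _ hyt)])

theorem mem_of_mem_getLast? {l : List β} {a : β} (h : a ∈ l.getLast?) : a ∈ l := by
  rcases List.mem_getLast?_eq_getLast h with ⟨h1, rfl⟩
  exact List.getLast_mem _

theorem mem_invRev {l : List (β × Bool)} {x : β × Bool} :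
    x ∈ FreeGroup.invRev l ↔ (x.1, !x.2) ∈ l := by
  rcases x with ⟨i, b⟩
  simp only [FreeGroup.invRev, List.mem_reverse, List.mem_map]
  constructor
  · rintro ⟨⟨j, c⟩, hj, h⟩
    obtain ⟨rfl, rfl⟩ : j = i ∧ (!c) = b := by simpa using h
    simpa using hj
  · intro h
    exact ⟨(i, !b), h, by simp⟩

theorem chain'_nc_invRev {l : List (β × Bool)} (h : l.Chain' nc) :
    (FreeGroup.invRev l).Chain' nc := by
  unfold FreeGroup.invRev
  rw [List.Chain', List.isChain_reverse, List.isChain_map]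
  refine h.imp ?_
  rintro ⟨i, b⟩ ⟨j, c⟩ hnc ⟨h1, h2⟩
  apply hnc
  refine ⟨h1.symm, ?_⟩
  simp only at h1 h2 ⊢
  cases b <;> cases c <;> simp_all

theorem chain'_nc_append {l1 l2 : List (β × Bool)} (h1 : l1.Chain' nc) (h2 : l2.Chain' nc)
    (h : ∀ x ∈ l1.getLast?, ∀ y ∈ l2.head?, nc x y) : (l1 ++ l2).Chain' nc :=
  List.isChain_append.2 ⟨h1, h2, h⟩

end WordLemmas

section Defs

variable (A : Type) [Fintype A]

/-- index of a letter in `Fin (card A + 1)` -/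
noncomputable def ltrY (a : A) : Fin (Fintype.card A + 1) := (Fintype.equivFin A a).castSucc

/-- the conjugating letter at the `Y` level -/
def cY : Fin (Fintype.card A + 1) := Fin.last _

/-- the stable letter -/
def sX : Fin (Fintype.card A + 2) := Fin.last _

/-- letter at `X` level -/
noncomputable def ltrX (a : A) : Fin (Fintype.card A + 2) := (ltrY A a).castSucc

/-- conjugating letter at `X` level -/
def cX : Fin (Fintype.card A + 2) := (cY A).castSucc

noncomputable def wYL (u : List A) : List (Fin (Fintype.card A + 1) × Bool) :=
  u.map fun a => (ltrY A a, true)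

noncomputable def xYL (u : List A) : List (Fin (Fintype.card A + 1) × Bool) :=
  wYL A u ++ ([(cY A, true)] ++ FreeGroup.invRev (wYL A u))

noncomputable def xXL (u : List A) : List (Fin (Fintype.card A + 2) × Bool) :=
  (xYL A u).map fun p => (p.1.castSucc, p.2)

noncomputable def qXL (u : List A) : List (Fin (Fintype.card A + 2) × Bool) :=
  xXL A u ++ ([(sX A, true)] ++ (FreeGroup.invRev (xXL A u) ++ [(sX A, false)]))

noncomputable def tXL (u : List A) (p : ℕ) : List (Fin (Fintype.card A + 2) × Bool) :=
  List.replicate p (sX A, true) ++ (qXL A u ++ List.replicate p (sX A, false))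

noncomputable def wXL (u : List A) : List (Fin (Fintype.card A + 2) × Bool) :=
  u.map fun a => (ltrX A a, true)

/-- case-1 word for `u ∈ L` -/
noncomputable def cpL (u : List A) : List (Fin (Fintype.card A + 2) × Bool) :=
  wXL A u ++ ([(sX A, true)] ++ FreeGroup.invRev (wXL A u))

/-- case-1 word for `u ∉ L` -/
noncomputable def cnL (u : List A) : List (Fin (Fintype.card A + 2) × Bool) :=
  (cX A, true) :: wXL A u

variable {A}

theorem ltrY_ne_cY (a : A) : ltrY A a ≠ cY A :=
  Fin.ne_of_lt (Fin.castSucc_lt_last _)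

theorem ltrX_ne_sX (a : A) : ltrX A a ≠ sX A :=
  Fin.ne_of_lt (Fin.castSucc_lt_last _)

theorem ltrX_ne_cX (a : A) : ltrX A a ≠ cX A := fun h =>
  ltrY_ne_cY a (Fin.castSucc_injective _ h)

theorem cX_ne_sX : cX A ≠ sX A := Fin.ne_of_lt (Fin.castSucc_lt_last _)

theorem mem_wYL {u : List A} {x} (hx : x ∈ wYL A u) : x.2 = true ∧ x.1 ≠ cY A := by
  simp only [wYL, List.mem_map] at hx
  rcases hx with ⟨a, _, rfl⟩
  exact ⟨rfl, ltrY_ne_cY a⟩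

theorem mem_wXL {u : List A} {x} (hx : x ∈ wXL A u) :
    x.2 = true ∧ x.1 ≠ sX A ∧ x.1 ≠ cX A := by
  simp only [wXL, List.mem_map] at hx
  rcases hx with ⟨a, _, rfl⟩
  exact ⟨rfl, ltrX_ne_sX a, ltrX_ne_cX a⟩

theorem chain'_wYL (u : List A) : (wYL A u).Chain' nc :=
  chain'_nc_of_snd_const true fun x hx => (mem_wYL hx).1

theorem chain'_xYL (u : List A) : (xYL A u).Chain' nc := by
  refine chain'_nc_append (chain'_wYL u) ?_ ?_
  · refine chain'_nc_append (List.isChain_singleton _) (chain'_nc_invRev (chain'_wYL u)) ?_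
    intro x hx y hy
    have hy' := mem_invRev.1 (List.mem_of_mem_head? hy)
    have h2 := (mem_wYL hy').2
    have hx' : x = (cY A, true) := by
      simp only [List.getLast?_singleton, Option.mem_def, Option.some_inj] at hx
      exact hx.symm
    exact nc_of_fst_ne (by rw [hx']; exact fun hc => h2 hc.symm)
  · intro x hx y hy
    have hx' := mem_wYL (mem_of_mem_getLast? hx)
    have hy' : y = (cY A, true) := by
      rw [List.head?_append] at hy
      simp only [List.head?_cons, Option.some_or, Option.or_some, Option.mem_def, Option.some_inj] at hy
      exact hy.symm
    exact nc_of_snd_eq (by rw [hx'.1, hy'])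

theorem chain'_xXL (u : List A) : (xXL A u).Chain' nc := by
  unfold xXL
  rw [List.Chain', List.isChain_map]
  refine (chain'_xYL u).imp ?_
  rintro ⟨i, b⟩ ⟨j, c⟩ hnc ⟨h1, h2⟩
  exact hnc ⟨Fin.castSucc_injective _ h1, h2⟩

theorem mem_xXL_fst_ne {u : List A} {x} (hx : x ∈ xXL A u) : x.1 ≠ sX A := by
  simp only [xXL, List.mem_map] at hx
  rcases hx with ⟨p, _, rfl⟩
  exact Fin.ne_of_lt (Fin.castSucc_lt_last _)

theorem mem_invRev_xXL_fst_ne {u : List A} {x} (hx : x ∈ FreeGroup.invRev (xXL A u)) :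
    x.1 ≠ sX A := by
  have := mem_invRev.1 hx
  exact mem_xXL_fst_ne (x := (x.1, !x.2)) this

theorem xXL_ne_nil (u : List A) : xXL A u ≠ [] := by
  simp [xXL, xYL, wYL]

theorem invRev_ne_nil {l : List (β × Bool)} (h : l ≠ []) : FreeGroup.invRev l ≠ [] := by
  intro hc
  apply h
  have := congrArg List.length hc
  rw [FreeGroup.invRev_length] at this
  exact List.length_eq_zero_iff.1 this

theorem head?_mem_of_ne_nil {l : List β} (h : l ≠ []) : ∃ z, l.head? = some z ∧ z ∈ l := by
  rcases l with _ | ⟨a, t⟩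
  · exact absurd rfl h
  · exact ⟨a, rfl, List.mem_cons_self⟩

theorem chain'_qXL (u : List A) : (qXL A u).Chain' nc := by
  refine chain'_nc_append (chain'_xXL u) ?_ ?_
  · refine chain'_nc_append (List.isChain_singleton _) ?_ ?_
    · refine chain'_nc_append (chain'_nc_invRev (chain'_xXL u)) (List.isChain_singleton _) ?_
      intro x hx y hy
      have hy' : y = (sX A, false) := by
        simp only [List.head?_cons, Option.mem_def, Option.some_inj] at hy
        exact hy.symm
      exact nc_of_fst_ne (by rw [hy']; exact mem_invRev_xXL_fst_ne (mem_of_mem_getLast? hx))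
    · intro x hx y hy
      have hx' : x = (sX A, true) := by
        simp only [List.getLast?_singleton, Option.mem_def, Option.some_inj] at hx
        exact hx.symm
      obtain ⟨z, hz1, hz2⟩ := head?_mem_of_ne_nil (invRev_ne_nil (xXL_ne_nil u))
      rw [List.head?_append, hz1] at hy
      simp only [Option.some_or, Option.or_some, Option.mem_def, Option.some_inj] at hy
      subst hy
      exact nc_of_fst_ne (by rw [hx']; exact fun hc => mem_invRev_xXL_fst_ne hz2 hc.symm)
  · intro x hx y hy
    have hx' := mem_of_mem_getLast? hx
    have hy' : y = (sX A, true) := by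
      rw [List.head?_append] at hy
      simp only [List.head?_cons, Option.some_or, Option.or_some, Option.mem_def, Option.some_inj] at hy
      exact hy.symm
    exact nc_of_fst_ne (by rw [hy']; exact mem_xXL_fst_ne hx')

theorem qXL_getLast? (u : List A) : (qXL A u).getLast? = some (sX A, false) := by
  unfold qXL
  rw [List.getLast?_append]
  rw [List.getLast?_append]
  rw [List.getLast?_concat]
  rfl

theorem qXL_ne_nil (u : List A) : qXL A u ≠ [] := by
  intro hc
  exact xXL_ne_nil u (List.append_eq_nil_iff.1 hc).1

theorem mem_qXL_head?_ne {u : List A} {y} (hy : (qXL A u).head? = some y) : y.1 ≠ sX A := by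
  obtain ⟨z, hz1, hz2⟩ := head?_mem_of_ne_nil (xXL_ne_nil u)
  unfold qXL at hy
  rw [List.head?_append, hz1] at hy
  simp only [Option.some_or, Option.or_some, Option.some_inj] at hy
  subst hy
  exact mem_xXL_fst_ne hz2

theorem chain'_tXL (u : List A) (p : ℕ) : (tXL A u p).Chain' nc := by
  refine chain'_nc_append (chain'_nc_of_snd_const true (by simp)) ?_ ?_
  · refine chain'_nc_append (chain'_qXL u) (chain'_nc_of_snd_const false (by simp)) ?_
    intro x hx y hy
    have hy' : y = (sX A, false) := by
      rw [List.head?_replicate] at hy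
      rcases em (p = 0) with h | h <;> simp [h] at hy
      exact hy.symm
    have hx2 : x = (sX A, false) := by
      rw [qXL_getLast?] at hx
      simpa using hx.symm
    exact nc_of_snd_eq (by rw [hx2, hy'])
  · intro x hx y hy
    have hx' : x = (sX A, true) := by
      rw [List.getLast?_replicate] at hx
      rcases em (p = 0) with h | h <;> simp [h] at hx
      exact hx.symm
    obtain ⟨z, hz1, hz2⟩ := head?_mem_of_ne_nil (qXL_ne_nil u)
    rw [List.head?_append, hz1] at hy
    simp only [Option.some_or, Option.or_some, Option.mem_def, Option.some_inj] at hy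
    subst hy
    exact nc_of_fst_ne (by rw [hx']; exact fun hc => mem_qXL_head?_ne hz1 hc.symm)

theorem chain'_cpL (u : List A) : (cpL A u).Chain' nc := by
  refine chain'_nc_append (chain'_nc_of_snd_const true fun x hx => (mem_wXL hx).1) ?_ ?_
  · refine chain'_nc_append (List.isChain_singleton _) (chain'_nc_invRev
      (chain'_nc_of_snd_const true fun x hx => (mem_wXL hx).1)) ?_
    intro x hx y hy
    have hx' : x = (sX A, true) := by
      simp only [List.getLast?_singleton, Option.mem_def, Option.some_inj] at hx
      exact hx.symm
    have hy' := mem_invRev.1 (List.mem_of_mem_head? hy)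
    have h2 := (mem_wXL (x := (y.1, !y.2)) hy').2.1
    exact nc_of_fst_ne (by rw [hx']; exact fun hc => h2 hc.symm)
  · intro x hx y hy
    have hx' := mem_wXL (mem_of_mem_getLast? hx)
    have hy' : y = (sX A, true) := by
      rw [List.head?_append] at hy
      simp only [List.head?_cons, Option.some_or, Option.or_some, Option.mem_def, Option.some_inj] at hy
      exact hy.symm
    exact nc_of_snd_eq (by rw [hx'.1, hy'])

theorem chain'_cnL (u : List A) : (cnL A u).Chain' nc := by
  refine List.isChain_cons.2 ⟨fun y hy => ?_,
    chain'_nc_of_snd_const true fun x hx => (mem_wXL hx).1⟩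
  have hy' := mem_wXL (List.mem_of_mem_head? hy)
  exact nc_of_fst_ne fun hc => hy'.2.2 hc.symm

end Defs
section GroupIds

variable {α : Type*}

theorem mk_singleton_true (i : α) : FreeGroup.mk [(i, true)] = FreeGroup.of i := rfl

theorem mk_invRev (l : List (α × Bool)) : FreeGroup.mk (FreeGroup.invRev l) = (FreeGroup.mk l)⁻¹ :=
  (FreeGroup.inv_mk).symm

theorem mk_singleton_false (i : α) : FreeGroup.mk [(i, false)] = (FreeGroup.of i)⁻¹ := by
  rw [← mk_singleton_true, FreeGroup.inv_mk]
  simp [FreeGroup.invRev]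

theorem mk_cons (x : α × Bool) (l : List (α × Bool)) :
    FreeGroup.mk (x :: l) = FreeGroup.mk [x] * FreeGroup.mk l := by
  rw [FreeGroup.mul_mk]; rfl

theorem mk_replicate_true (i : α) (p : ℕ) :
    FreeGroup.mk (List.replicate p (i, true)) = FreeGroup.of i ^ p := by
  classical
  rw [← FreeGroup.toWord_of_pow (α := α) i p, FreeGroup.mk_toWord]

theorem mk_replicate_false (i : α) (p : ℕ) :
    FreeGroup.mk (List.replicate p (i, false)) = (FreeGroup.of i ^ p)⁻¹ := by
  rw [← mk_replicate_true i p, FreeGroup.inv_mk]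
  simp [FreeGroup.invRev, List.map_replicate]

theorem mk_eq_one_iff {l : List (α × Bool)} :
    FreeGroup.mk l = 1 ↔ (letI := Classical.decEq α; FreeGroup.reduce l) = [] := by
  classical
  constructor
  · intro h
    have := congrArg FreeGroup.toWord h
    rw [FreeGroup.toWord_mk, FreeGroup.toWord_one] at this
    exact this
  · intro h
    have : FreeGroup.mk l = FreeGroup.mk ([] : List (α × Bool)) := by
      apply FreeGroup.reduce.exact
      rw [h]; rfl
    rw [this, ← FreeGroup.one_eq_mk]

end GroupIds

section PartC

variable {A : Type} [Fintype A]

theorem mk_qXL (u : List A) :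
    FreeGroup.mk (qXL A u) = FreeGroup.mk (xXL A u) * (FreeGroup.of (sX A) *
      ((FreeGroup.mk (xXL A u))⁻¹ * (FreeGroup.of (sX A))⁻¹)) := by
  unfold qXL
  rw [← FreeGroup.mul_mk, ← FreeGroup.mul_mk, ← FreeGroup.mul_mk]
  rw [mk_singleton_true, mk_invRev, mk_singleton_false]

theorem mk_tXL (u : List A) (p : ℕ) :
    FreeGroup.mk (tXL A u p) = FreeGroup.of (sX A) ^ p *
      (FreeGroup.mk (qXL A u) * (FreeGroup.of (sX A) ^ p)⁻¹) := by
  unfold tXL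
  rw [← FreeGroup.mul_mk, ← FreeGroup.mul_mk]
  rw [mk_replicate_true, mk_replicate_false]

theorem mk_xXL (u : List A) :
    FreeGroup.mk (xXL A u) = FreeGroup.map Fin.castSucc (FreeGroup.mk (xYL A u)) := by
  rw [FreeGroup.map.mk]; rfl

theorem mk_xYL (u : List A) :
    FreeGroup.mk (xYL A u) = FreeGroup.mk (wYL A u) *
      (FreeGroup.of (cY A) * (FreeGroup.mk (wYL A u))⁻¹) := by
  unfold xYL
  rw [← FreeGroup.mul_mk, ← FreeGroup.mul_mk]
  rw [mk_singleton_true, mk_invRev]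

theorem mk_wYL_cons (a : A) (u : List A) :
    FreeGroup.mk (wYL A (a :: u)) = FreeGroup.of (ltrY A a) * FreeGroup.mk (wYL A u) := by
  rw [show wYL A (a :: u) = (ltrY A a, true) :: wYL A u from rfl, mk_cons, mk_singleton_true]

theorem mk_cpL (u : List A) :
    FreeGroup.mk (cpL A u) = FreeGroup.mk (wXL A u) *
      (FreeGroup.of (sX A) * (FreeGroup.mk (wXL A u))⁻¹) := by
  unfold cpL
  rw [← FreeGroup.mul_mk, ← FreeGroup.mul_mk]
  rw [mk_singleton_true, mk_invRev]

theorem mk_cnL (u : List A) :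
    FreeGroup.mk (cnL A u) = FreeGroup.of (cX A) * FreeGroup.mk (wXL A u) := by
  rw [show cnL A u = (cX A, true) :: wXL A u from rfl, mk_cons, mk_singleton_true]

-- lengths
theorem length_wYL (u : List A) : (wYL A u).length = u.length := by simp [wYL]

theorem length_xXL (u : List A) : (xXL A u).length = 2 * u.length + 1 := by
  simp [xXL, xYL, FreeGroup.invRev, length_wYL]; omega

theorem length_qXL (u : List A) : (qXL A u).length = 4 * u.length + 4 := by
  simp [qXL, FreeGroup.invRev_length, length_xXL]; omega

theorem length_tXL (u : List A) (p : ℕ) :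
    (tXL A u p).length = 2 * p + (4 * u.length + 4) := by
  simp [tXL, length_qXL]; omega

theorem length_cpL (u : List A) : (cpL A u).length = 2 * u.length + 1 := by
  simp [cpL, wXL, FreeGroup.invRev]; omega

theorem length_cnL (u : List A) : (cnL A u).length = u.length + 1 := by
  simp [cnL, wXL]

-- injectivity
theorem ltrX_injective : Function.Injective (ltrX A) := by
  intro a b h
  have := Fin.castSucc_injective _ h
  have := Fin.castSucc_injective _ this
  exact (Fintype.equivFin A).injective this

theorem ltrY_injective : Function.Injective (ltrY A) := by
  intro a b h
  exact (Fintype.equivFin A).injective (Fin.castSucc_injective _ h)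

theorem wXL_injective : Function.Injective (wXL A) := by
  intro u v h
  refine List.map_injective_iff.2 ?_ h
  intro a b hab
  exact ltrX_injective (by simpa using congrArg Prod.fst hab)

theorem wYL_injective : Function.Injective (wYL A) := by
  intro u v h
  refine List.map_injective_iff.2 ?_ h
  intro a b hab
  exact ltrY_injective (by simpa using congrArg Prod.fst hab)

theorem cpL_injective : Function.Injective (cpL A) := by
  intro u v h
  have hl := congrArg List.length h
  rw [length_cpL, length_cpL] at hl
  have hw : (wXL A u).length = (wXL A v).length := by simp [wXL]; omega
  exact wXL_injective (List.append_inj h hw).1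

theorem cnL_injective : Function.Injective (cnL A) := by
  intro u v h
  exact wXL_injective (by injection h)

theorem sX_mem_cpL (u : List A) : (sX A, true) ∈ cpL A u := by
  unfold cpL
  exact List.mem_append_right _ (List.mem_append_left _ (List.mem_singleton_self _))

theorem sX_not_mem_cnL (u : List A) {x} (hx : x ∈ cnL A u) : x.1 ≠ sX A := by
  rcases List.mem_cons.1 hx with h | h
  · rw [h]; exact cX_ne_sX
  · exact (mem_wXL h).2.1

theorem cpL_ne_cnL (u v : List A) : cpL A u ≠ cnL A v := by
  intro h
  exact sX_not_mem_cnL v (h ▸ sX_mem_cpL u) rfl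

-- reducedness
theorem reduce_of_chain' {l : List (Fin (Fintype.card A + 2) × Bool)} (h : l.Chain' nc) :
    (letI := Classical.decEq (Fin (Fintype.card A + 2)); FreeGroup.reduce l) = l := by
  rw [reduce_irrel]
  exact reduce_eq_self_of_chain l h

theorem mk_inj_of_chain' {l l' : List (Fin (Fintype.card A + 2) × Bool)}
    (h : l.Chain' nc) (h' : l'.Chain' nc) (he : FreeGroup.mk l = FreeGroup.mk l') : l = l' := by
  classical
  have h1 := reduce_eq_self_of_chain l h
  have h2 := reduce_eq_self_of_chain l' h'
  have := FreeGroup.reduce.sound he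
  rw [h1, h2] at this
  exact this

end PartC
section Case1Group

variable (A : Type) [Fintype A]

/-- retraction killing the stable letter -/
noncomputable def rhoA : FreeGroup (Fin (Fintype.card A + 2)) →*
    FreeGroup (Fin (Fintype.card A + 2)) :=
  FreeGroup.lift (fun i => if i = sX A then 1 else FreeGroup.of i)

variable {A}

theorem rhoA_of_sX : rhoA A (FreeGroup.of (sX A)) = 1 := by
  rw [rhoA, FreeGroup.lift_apply_of, if_pos rfl]

theorem rhoA_of_ne {i : Fin (Fintype.card A + 2)} (h : i ≠ sX A) :
    rhoA A (FreeGroup.of i) = FreeGroup.of i := by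
  rw [rhoA, FreeGroup.lift_apply_of, if_neg h]

theorem rhoA_mk (l : List (Fin (Fintype.card A + 2) × Bool)) :
    rhoA A (FreeGroup.mk l) = FreeGroup.mk (l.filter fun p => p.1 ≠ sX A) := by
  induction l with
  | nil => rw [← FreeGroup.one_eq_mk, map_one, List.filter_nil, ← FreeGroup.one_eq_mk]
  | cons x l ih =>
    rw [mk_cons, map_mul, ih]
    by_cases hx : x.1 = sX A
    · have hsingle : rhoA A (FreeGroup.mk [x]) = 1 := by
        rcases x with ⟨i, b⟩
        cases b
        · rw [mk_singleton_false, map_inv]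
          simp only at hx
          rw [hx, rhoA_of_sX, inv_one]
        · rw [mk_singleton_true]
          simp only at hx
          rw [hx, rhoA_of_sX]
      rw [hsingle, one_mul, List.filter_cons_of_neg (by simpa using hx)]
    · have hsingle : rhoA A (FreeGroup.mk [x]) = FreeGroup.mk [x] := by
        rcases x with ⟨i, b⟩
        cases b
        · rw [mk_singleton_false, map_inv, rhoA_of_ne hx]
        · rw [mk_singleton_true, rhoA_of_ne hx]
      rw [hsingle, List.filter_cons_of_pos (by simpa using hx), mk_cons]
      rw [FreeGroup.mul_mk, FreeGroup.mul_mk]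
      simp

theorem ncl_sX_eq_ker :
    Subgroup.normalClosure {FreeGroup.of (sX A)} = (rhoA A).ker := by
  apply le_antisymm
  · apply Subgroup.normalClosure_le_normal
    intro x hx
    rw [Set.mem_singleton_iff] at hx
    subst hx
    exact rhoA_of_sX
  · intro x hx
    set N := Subgroup.normalClosure {FreeGroup.of (sX A)} with hN
    haveI : N.Normal := Subgroup.normalClosure_normal
    set j : FreeGroup (Fin (Fintype.card A + 2)) →* _ :=
      FreeGroup.lift (fun i => QuotientGroup.mk' N (FreeGroup.of i)) with hj
    have hcomp : j.comp (rhoA A) = QuotientGroup.mk' N := by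
      apply FreeGroup.ext_hom
      intro i
      by_cases hi : i = sX A
      · subst hi
        rw [MonoidHom.comp_apply, rhoA_of_sX, map_one]
        symm
        rw [QuotientGroup.mk'_apply, QuotientGroup.eq_one_iff]
        exact Subgroup.subset_normalClosure (Set.mem_singleton _)
      · rw [MonoidHom.comp_apply, rhoA_of_ne hi, hj, FreeGroup.lift_apply_of]
    have : QuotientGroup.mk' N x = 1 := by
      rw [← hcomp, MonoidHom.comp_apply, MonoidHom.mem_ker.1 hx, map_one]
    rwa [QuotientGroup.mk'_apply, QuotientGroup.eq_one_iff] at this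

theorem mem_ncl_sX_iff (l : List (Fin (Fintype.card A + 2) × Bool)) :
    FreeGroup.mk l ∈ Subgroup.normalClosure {FreeGroup.of (sX A)} ↔
      FreeGroup.reduce (l.filter fun p => p.1 ≠ sX A) = [] := by
  rw [ncl_sX_eq_ker, MonoidHom.mem_ker, rhoA_mk, mk_eq_one_iff]
  exact iff_of_eq (congrArg (fun x => x = []) (reduce_irrel _))

theorem cpL_mem_ncl (u : List A) :
    FreeGroup.mk (cpL A u) ∈ Subgroup.normalClosure {FreeGroup.of (sX A)} := by
  rw [ncl_sX_eq_ker, MonoidHom.mem_ker, mk_cpL, map_mul, map_mul, map_inv, rhoA_of_sX]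
  group

theorem cnL_not_mem_ncl (u : List A) :
    FreeGroup.mk (cnL A u) ∉ Subgroup.normalClosure {FreeGroup.of (sX A)} := by
  rw [ncl_sX_eq_ker, MonoidHom.mem_ker, rhoA_mk]
  have hfilter : (cnL A u).filter (fun p => p.1 ≠ sX A) = cnL A u := by
    rw [List.filter_eq_self]
    intro x hx
    simpa using sX_not_mem_cnL u hx
  rw [hfilter, mk_eq_one_iff]
  intro h
  rw [reduce_irrel, reduce_eq_self_of_chain _ (chain'_cnL u)] at h
  exact List.cons_ne_nil _ _ h

end Case1Group

section KeyLemma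

variable {A : Type} [Fintype A]

/-- the associated subgroup of the HNN extension -/
def HV (V : Set (List A)) : Subgroup (FreeGroup (Fin (Fintype.card A + 1))) :=
  Subgroup.closure ((fun v => FreeGroup.mk (xYL A v)) '' V)

/-- the canonical map to the HNN extension -/
noncomputable def PhiV (V : Set (List A)) :
    FreeGroup (Fin (Fintype.card A + 2)) →*
      HNNExtension (FreeGroup (Fin (Fintype.card A + 1))) (HV V) (HV V) (MulEquiv.refl _) :=
  FreeGroup.lift (Fin.lastCases HNNExtension.t
    (fun y => HNNExtension.of (FreeGroup.of y)))

theorem PhiV_sX (V : Set (List A)) : PhiV V (FreeGroup.of (sX A)) = HNNExtension.t := by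
  rw [PhiV, FreeGroup.lift_apply_of]
  exact Fin.lastCases_last

theorem PhiV_castSucc (V : Set (List A)) (y : Fin (Fintype.card A + 1)) :
    PhiV V (FreeGroup.of y.castSucc) = HNNExtension.of (FreeGroup.of y) := by
  rw [PhiV, FreeGroup.lift_apply_of]
  exact Fin.lastCases_castSucc y

theorem PhiV_emb (V : Set (List A)) (g : FreeGroup (Fin (Fintype.card A + 1))) :
    PhiV V (FreeGroup.map Fin.castSucc g) = HNNExtension.of g := by
  have : (PhiV V).comp (FreeGroup.map Fin.castSucc) =
      (HNNExtension.of : _ →* HNNExtension _ (HV V) (HV V) (MulEquiv.refl _)).comp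
        (MonoidHom.id _) := by
    apply FreeGroup.ext_hom
    intro y
    rw [MonoidHom.comp_apply, MonoidHom.comp_apply, FreeGroup.map.of, MonoidHom.id_apply]
    exact PhiV_castSucc V y
  have := DFunLike.congr_fun this g
  simpa using this

theorem PhiV_qXL (V : Set (List A)) (v : List A) :
    PhiV V (FreeGroup.mk (qXL A v)) =
      HNNExtension.of (FreeGroup.mk (xYL A v)) * (HNNExtension.t *
        ((HNNExtension.of (FreeGroup.mk (xYL A v)))⁻¹ * HNNExtension.t⁻¹)) := by
  rw [mk_qXL, map_mul, map_mul, map_mul, map_inv, map_inv, PhiV_sX, mk_xXL, PhiV_emb]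

theorem PhiV_kills (V : Set (List A)) {v : List A} (hv : v ∈ V) :
    PhiV V (FreeGroup.mk (qXL A v)) = 1 := by
  rw [PhiV_qXL]
  set g := FreeGroup.mk (xYL A v) with hg
  have hmem : g ∈ HV V := Subgroup.subset_closure (Set.mem_image_of_mem _ hv)
  have hcomm : HNNExtension.t * HNNExtension.of g =
      HNNExtension.of (G := FreeGroup (Fin (Fintype.card A + 1)))
        (A := HV V) (B := HV V) (φ := MulEquiv.refl _) g * HNNExtension.t := by
    have := HNNExtension.t_mul_of (φ := MulEquiv.refl (↥(HV V))) ⟨g, hmem⟩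
    simpa using this
  have h2 : HNNExtension.of (G := FreeGroup (Fin (Fintype.card A + 1)))
      (A := HV V) (B := HV V) (φ := MulEquiv.refl _) g * HNNExtension.t =
      HNNExtension.t * HNNExtension.of g := hcomm.symm
  calc HNNExtension.of g * (HNNExtension.t * ((HNNExtension.of g)⁻¹ * HNNExtension.t⁻¹))
      = (HNNExtension.of g * HNNExtension.t) * ((HNNExtension.of g)⁻¹ * HNNExtension.t⁻¹) :=
        (mul_assoc _ _ _).symm
    _ = (HNNExtension.t * HNNExtension.of g) * ((HNNExtension.of g)⁻¹ * HNNExtension.t⁻¹) := by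
        rw [h2]
    _ = HNNExtension.t * (HNNExtension.of g * ((HNNExtension.of g)⁻¹ * HNNExtension.t⁻¹)) :=
        mul_assoc _ _ _
    _ = HNNExtension.t * HNNExtension.t⁻¹ := by rw [mul_inv_cancel_left]
    _ = 1 := mul_inv_cancel _

/-- If the image of `q u` is trivial in the HNN extension, the conjugated letter lies in the
associated subgroup; this is Britton's lemma. -/
theorem britton (V : Set (List A)) (u : List A)
    (h : PhiV V (FreeGroup.mk (qXL A u)) = 1) : FreeGroup.mk (xYL A u) ∈ HV V := by
  by_contra hgH
  rw [PhiV_qXL] at h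
  set g := FreeGroup.mk (xYL A u) with hgdef
  have hchain : List.Chain'
      (fun a b : ℤˣ × FreeGroup (Fin (Fintype.card A + 1)) =>
        a.2 ∈ HNNExtension.toSubgroup (HV V) (HV V) a.1 → a.1 = b.1)
      [((1 : ℤˣ), g⁻¹), ((-1 : ℤˣ), 1)] := by
    refine List.isChain_cons_cons.2 ⟨?_, List.isChain_singleton _⟩
    intro hmem
    exfalso
    apply hgH
    have : g⁻¹ ∈ HV V := by simpa using hmem
    exact (Subgroup.inv_mem_iff _).1 this
  set w : HNNExtension.NormalWord.ReducedWord (FreeGroup (Fin (Fintype.card A + 1)))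
      (HV V) (HV V) := ⟨g, [((1 : ℤˣ), g⁻¹), ((-1 : ℤˣ), 1)], hchain⟩ with hw
  have hprod : w.prod (MulEquiv.refl _) = HNNExtension.of g *
      (HNNExtension.t * ((HNNExtension.of g)⁻¹ * HNNExtension.t⁻¹)) := by
    simp only [hw, HNNExtension.NormalWord.ReducedWord.prod, List.map_cons, List.map_nil,
      List.prod_cons, List.prod_nil, map_one, map_inv, Units.val_one, Units.val_neg,
      zpow_one, zpow_neg, mul_one]
    simp [mul_assoc]
  have hrange : w.prod (MulEquiv.refl _) ∈
      (HNNExtension.of.range : Subgroup (HNNExtension _ (HV V) (HV V) (MulEquiv.refl _))) := by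
    rw [hprod, h]
    exact one_mem _
  have := HNNExtension.ReducedWord.toList_eq_nil_of_mem_of_range (MulEquiv.refl _) w hrange
  rw [hw] at this
  simp at this

end KeyLemma
section ActionArg
open scoped Classical

variable {A : Type} [Fintype A]

/-- the involution used in the ping-pong argument -/
noncomputable def sigmaV (V : Set (List A)) :
    Equiv.Perm (FreeGroup (Fin (Fintype.card A + 1)) × Bool) :=
  Function.Involutive.toPerm
    (fun ω => if ω.1 ∈ (fun v => (FreeGroup.mk (wYL A v))⁻¹) '' V then ω else (ω.1, !ω.2))
    (by
      intro ω
      dsimp only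
      by_cases h : ω.1 ∈ (fun v => (FreeGroup.mk (wYL A v))⁻¹) '' V
      · rw [if_pos h, if_pos h]
      · rw [if_neg h]
        have h2 : ((ω.1, !ω.2) :
            FreeGroup (Fin (Fintype.card A + 1)) × Bool).1 ∉
            (fun v => (FreeGroup.mk (wYL A v))⁻¹) '' V := h
        rw [if_neg h2]
        simp)

theorem sigmaV_fix {V : Set (List A)} {ω : FreeGroup (Fin (Fintype.card A + 1)) × Bool}
    (h : ω.1 ∈ (fun v => (FreeGroup.mk (wYL A v))⁻¹) '' V) : sigmaV V ω = ω := by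
  exact if_pos h

theorem sigmaV_flip {V : Set (List A)} {ω : FreeGroup (Fin (Fintype.card A + 1)) × Bool}
    (h : ω.1 ∉ (fun v => (FreeGroup.mk (wYL A v))⁻¹) '' V) : sigmaV V ω = (ω.1, !ω.2) := by
  exact if_neg h

/-- the permutation action of the base free group -/
noncomputable def actV (V : Set (List A)) :
    FreeGroup (Fin (Fintype.card A + 1)) →*
      Equiv.Perm (FreeGroup (Fin (Fintype.card A + 1)) × Bool) :=
  FreeGroup.lift (Fin.lastCases (sigmaV V)
    (fun i : Fin (Fintype.card A) =>
      Equiv.prodCongr (Equiv.mulLeft (FreeGroup.of i.castSucc)) (Equiv.refl Bool)))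

theorem actV_cY (V : Set (List A)) : actV V (FreeGroup.of (cY A)) = sigmaV V := by
  rw [actV, FreeGroup.lift_apply_of]
  exact Fin.lastCases_last

theorem actV_ltrY (V : Set (List A)) (a : A) :
    actV V (FreeGroup.of (ltrY A a)) =
      Equiv.prodCongr (Equiv.mulLeft (FreeGroup.of (ltrY A a))) (Equiv.refl Bool) := by
  rw [actV, FreeGroup.lift_apply_of]
  exact Fin.lastCases_castSucc (Fintype.equivFin A a)

theorem actV_wYL (V : Set (List A)) (v : List A)
    (ω : FreeGroup (Fin (Fintype.card A + 1)) × Bool) :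
    actV V (FreeGroup.mk (wYL A v)) ω = (FreeGroup.mk (wYL A v) * ω.1, ω.2) := by
  induction v generalizing ω with
  | nil =>
    have h1 : FreeGroup.mk (wYL A ([] : List A)) = 1 := by
      rw [show wYL A ([] : List A) = [] from rfl, ← FreeGroup.one_eq_mk]
    rw [h1, map_one]
    simp
  | cons a v ih =>
    rw [mk_wYL_cons, map_mul]
    show actV V (FreeGroup.of (ltrY A a)) (actV V (FreeGroup.mk (wYL A v)) ω) = _
    rw [ih, actV_ltrY]
    simp [mul_assoc]

theorem actV_wYL_inv (V : Set (List A)) (v : List A)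
    (ω : FreeGroup (Fin (Fintype.card A + 1)) × Bool) :
    actV V ((FreeGroup.mk (wYL A v))⁻¹) ω = ((FreeGroup.mk (wYL A v))⁻¹ * ω.1, ω.2) := by
  rw [map_inv]
  have : (actV V (FreeGroup.mk (wYL A v)))⁻¹ ω = ((FreeGroup.mk (wYL A v))⁻¹ * ω.1, ω.2) := by
    rw [Equiv.Perm.inv_eq_iff_eq, actV_wYL]
    show ω = (FreeGroup.mk (wYL A v) * ((FreeGroup.mk (wYL A v))⁻¹ * ω.1), ω.2)
    rw [mul_inv_cancel_left]
  exact this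

theorem mk_wYL_injective : Function.Injective (fun v : List A => FreeGroup.mk (wYL A v)) := by
  intro u v h
  exact wYL_injective (mk_inj_of_chain (chain'_wYL u) (chain'_wYL v) h)

theorem mem_HV_imp {V : Set (List A)} {u : List A}
    (h : FreeGroup.mk (xYL A u) ∈ HV V) : u ∈ V := by
  by_contra hu
  set ω₀ : FreeGroup (Fin (Fintype.card A + 1)) × Bool := (1, false) with hω₀
  have hstab : ∀ w ∈ (fun v => FreeGroup.mk (xYL A v)) '' V,
      w ∈ Subgroup.comap (actV V)
        (MulAction.stabilizer (Equiv.Perm (FreeGroup (Fin (Fintype.card A + 1)) × Bool)) ω₀) := by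
    rintro _ ⟨v, hv, rfl⟩
    rw [Subgroup.mem_comap, MulAction.mem_stabilizer_iff]
    show actV V (FreeGroup.mk (xYL A v)) ω₀ = ω₀
    rw [mk_xYL, map_mul, map_mul]
    simp only [Equiv.Perm.mul_apply]
    rw [actV_wYL_inv, actV_cY]
    rw [sigmaV_fix (by
      simp only [hω₀, mul_one]
      exact Set.mem_image_of_mem _ hv)]
    rw [actV_wYL]
    show (FreeGroup.mk (wYL A v) * ((FreeGroup.mk (wYL A v))⁻¹ * ω₀.1), ω₀.2) = ω₀
    rw [mul_inv_cancel_left]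
  have hle : HV V ≤ Subgroup.comap (actV V)
      (MulAction.stabilizer (Equiv.Perm (FreeGroup (Fin (Fintype.card A + 1)) × Bool)) ω₀) :=
    (Subgroup.closure_le _).2 hstab
  have hfix := hle h
  rw [Subgroup.mem_comap, MulAction.mem_stabilizer_iff] at hfix
  have hfix' : actV V (FreeGroup.mk (xYL A u)) ω₀ = ω₀ := hfix
  rw [mk_xYL, map_mul, map_mul] at hfix'
  simp only [Equiv.Perm.mul_apply] at hfix'
  rw [actV_wYL_inv, actV_cY] at hfix'
  rw [sigmaV_flip (by
    simp only [hω₀, mul_one]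
    rintro ⟨v, hv, he⟩
    have : v = u := mk_wYL_injective (inv_injective he)
    exact hu (this ▸ hv))] at hfix'
  rw [actV_wYL] at hfix'
  simp only [hω₀] at hfix'
  have := congrArg Prod.snd hfix'
  simp at this

/-- The key lemma: `q u` lies in the normal closure of `{q v : v ∈ V}` iff `u ∈ V`. -/
theorem key_lemma (V : Set (List A)) (u : List A) :
    FreeGroup.mk (qXL A u) ∈
      Subgroup.normalClosure ((fun v => FreeGroup.mk (qXL A v)) '' V) ↔ u ∈ V := by
  constructor
  · intro h
    haveI : ((PhiV (A := A) V).ker).Normal := MonoidHom.normal_ker _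
    have hker : Subgroup.normalClosure ((fun v => FreeGroup.mk (qXL A v)) '' V) ≤
        (PhiV V).ker := by
      apply Subgroup.normalClosure_le_normal
      rintro _ ⟨v, hv, rfl⟩
      exact PhiV_kills V hv
    have h1 : PhiV V (FreeGroup.mk (qXL A u)) = 1 := hker h
    exact mem_HV_imp (britton V u h1)
  · intro h
    exact Subgroup.subset_normalClosure (Set.mem_image_of_mem _ h)

end ActionArg
section PrimrecHelpers

variable {α β σ : Type*} [Primcodable α] [Primcodable β] [Primcodable σ]

theorem list_any_eq_foldr (l : List β) (q : β → Bool) :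
    l.any q = l.foldr (fun b r => bif q b then true else r) false := by
  induction l with
  | nil => rfl
  | cons x t ih =>
    rw [List.any_cons, List.foldr_cons, ← ih]
    cases q x <;> simp

theorem list_all_eq_foldr (l : List β) (q : β → Bool) :
    l.all q = l.foldr (fun b r => bif q b then r else false) true := by
  induction l with
  | nil => rfl
  | cons x t ih =>
    rw [List.all_cons, List.foldr_cons, ← ih]
    cases q x <;> simp

theorem primrec_list_any {f : α → List β} {p : α → β → Bool}
    (hf : Primrec f) (hp : Primrec₂ p) : Primrec fun a => (f a).any (p a) := by
  have h := Primrec.list_foldr (f := f) (g := fun _ => false)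
    (h := fun a (x : β × Bool) => bif p a x.1 then true else x.2) hf (Primrec.const false)
    (Primrec.cond (hp.comp Primrec.fst (Primrec.fst.comp Primrec.snd))
      (Primrec.const true) (Primrec.snd.comp Primrec.snd)).to₂
  exact h.of_eq fun a => by rw [list_any_eq_foldr]

theorem primrec_list_all {f : α → List β} {p : α → β → Bool}
    (hf : Primrec f) (hp : Primrec₂ p) : Primrec fun a => (f a).all (p a) := by
  have h := Primrec.list_foldr (f := f) (g := fun _ => true)
    (h := fun a (x : β × Bool) => bif p a x.1 then x.2 else false) hf (Primrec.const true)
    (Primrec.cond (hp.comp Primrec.fst (Primrec.fst.comp Primrec.snd))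
      (Primrec.snd.comp Primrec.snd) (Primrec.const false)).to₂
  exact h.of_eq fun a => by rw [list_all_eq_foldr]

theorem primrec_bnot : Primrec (fun b : Bool => !b) :=
  Primrec.cond Primrec.id (Primrec.const false) (Primrec.const true)

theorem filter_eq_flatMap (p : β → Bool) (l : List β) :
    l.filter p = l.flatMap (fun x => if p x then [x] else []) := by
  induction l with
  | nil => rfl
  | cons x t ih =>
    by_cases h : p x
    · rw [List.filter_cons_of_pos h, List.flatMap_cons, if_pos h, ih]; rfl
    · rw [List.filter_cons_of_neg (by simpa using h), List.flatMap_cons,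
        if_neg h, ih]; rfl

end PrimrecHelpers

section WordsUpTo

variable {A : Type} [Fintype A]

/-- all words over the (finite) alphabet of length at most `n` (with repetitions) -/
def wordsUpTo (letters : List A) : ℕ → List (List A)
  | 0 => [[]]
  | n + 1 => wordsUpTo letters n ++
      (wordsUpTo letters n).flatMap (fun w => letters.map (· :: w))

theorem mem_wordsUpTo (letters : List A) (hl : ∀ a : A, a ∈ letters) :
    ∀ (n : ℕ) (v : List A), v.length ≤ n → v ∈ wordsUpTo letters n := by
  intro n
  induction n with
  | zero =>
    intro v hv
    rw [List.length_eq_zero_iff.1 (Nat.le_zero.1 hv)]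
    exact List.mem_singleton_self _
  | succ n ih =>
    intro v hv
    by_cases h : v.length ≤ n
    · exact List.mem_append_left _ (ih v h)
    · rcases v with _ | ⟨a, w⟩
      · simp at h
      · refine List.mem_append_right _ ?_
        rw [List.mem_flatMap]
        refine ⟨w, ih w ?_, List.mem_map.2 ⟨a, hl a, rfl⟩⟩
        simp only [List.length_cons] at hv
        omega

theorem wordsUpTo_eq_rec (letters : List A) (n : ℕ) :
    wordsUpTo letters n = Nat.rec [[]]
      (fun _ ih => ih ++ ih.flatMap (fun w => letters.map (· :: w))) n := by
  induction n with
  | zero => rfl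
  | succ n ih => rw [wordsUpTo, ih]

theorem primrec_wordsUpTo [Primcodable A] (letters : List A) :
    Primrec (wordsUpTo letters) := by
  have hg : Primrec₂ (fun (_ : ℕ) (p : ℕ × List (List A)) =>
      p.2 ++ p.2.flatMap (fun w => letters.map (· :: w))) := by
    have hsnd : Primrec (fun q : ℕ × (ℕ × List (List A)) => q.2.2) :=
      Primrec.snd.comp Primrec.snd
    have hinner : Primrec₂ (fun (q : ℕ × (ℕ × List (List A))) (w : List A) =>
        letters.map (· :: w)) := by
      refine Primrec.list_map (Primrec.const letters) ?_
      exact (Primrec.list_cons.comp Primrec.snd (Primrec.snd.comp Primrec.fst)).to₂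
    have hflat : Primrec (fun q : ℕ × (ℕ × List (List A)) =>
        (q.2.2).flatMap (fun w => letters.map (· :: w))) :=
      Primrec.list_flatMap hsnd hinner
    exact Primrec.list_append.comp hsnd hflat
  have h : Primrec fun n => (Nat.rec [[]]
      (fun _ ih => ih ++ ih.flatMap (fun w => letters.map (· :: w))) n : List (List A)) :=
    (Primrec.nat_rec (f := fun _ : ℕ => ([[]] : List (List A))) (Primrec.const _) hg).comp
      (Primrec.const 0) Primrec.id
  exact h.of_eq fun n => (wordsUpTo_eq_rec letters n).symm

end WordsUpTo
section Case2Math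

open Nat.Partrec (Code)

variable {A : Type} [Fintype A] [Primcodable A]

theorem exists_code_of_ce (L : Set (List A))
    (hL : Partrec fun a => Part.assert (a ∈ L) fun _ => Part.some ()) :
    ∃ c : Code, ∀ u : List A, u ∈ L ↔
      ∃ k, (Code.evaln k c (Encodable.encode u)).isSome = true := by
  obtain ⟨c, hc⟩ := Code.exists_code.1 hL
  refine ⟨c, fun u => ?_⟩
  have hdom : (c.eval (Encodable.encode u)).Dom ↔ u ∈ L := by
    rw [hc]
    simp [Encodable.encodek, Part.assert]
  constructor
  · intro hu
    obtain ⟨x, hx⟩ := Part.dom_iff_mem.1 (hdom.2 hu)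
    obtain ⟨k, hk⟩ := Code.evaln_complete.1 hx
    exact ⟨k, by rw [Option.isSome_iff_exists]; exact ⟨x, hk⟩⟩
  · rintro ⟨k, hk⟩
    obtain ⟨x, hx⟩ := Option.isSome_iff_exists.1 hk
    have := Code.evaln_sound (k := k) (c := c) (n := Encodable.encode u) (x := x) hx
    exact hdom.1 (Part.dom_iff_mem.2 ⟨x, this⟩)

/-- the decidable set of (padded) relators -/
def relSet (c : Code) : Set (FreeGroup (Fin (Fintype.card A + 2))) :=
  {w | ∃ (v : List A) (k : ℕ), (Code.evaln k c (Encodable.encode v)).isSome = true ∧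
      (∀ j < k, (Code.evaln j c (Encodable.encode v)).isSome = false) ∧
      w = FreeGroup.mk (tXL A v k)}

variable {L : Set (List A)} {c : Code}
  (hc : ∀ u : List A, u ∈ L ↔ ∃ k, (Code.evaln k c (Encodable.encode u)).isSome = true)

theorem tXL_conj (v : List A) (k : ℕ) :
    FreeGroup.mk (tXL A v k) = (FreeGroup.of (sX A) ^ k) * FreeGroup.mk (qXL A v) *
      (FreeGroup.of (sX A) ^ k)⁻¹ := by
  rw [mk_tXL]; group

include hc in
theorem qXL_mem_ncl_relSet {v : List A} (hv : v ∈ L) :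
    FreeGroup.mk (qXL A v) ∈ Subgroup.normalClosure (relSet (A := A) c) := by
  haveI : (Subgroup.normalClosure (relSet (A := A) c)).Normal :=
    Subgroup.normalClosure_normal
  have hex : ∃ k, (Code.evaln k c (Encodable.encode v)).isSome = true := (hc v).1 hv
  set k₀ := Nat.find hex with hk₀
  have hmem : FreeGroup.mk (tXL A v k₀) ∈ relSet (A := A) c := by
    refine ⟨v, k₀, Nat.find_spec hex, fun j hj => ?_, rfl⟩
    have := Nat.find_min hex hj
    simpa using this
  have h1 : FreeGroup.mk (tXL A v k₀) ∈ Subgroup.normalClosure (relSet (A := A) c) :=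
    Subgroup.subset_normalClosure hmem
  have h2 := Subgroup.Normal.conj_mem ‹_› _ h1 ((FreeGroup.of (sX A) ^ k₀)⁻¹)
  have h3 : ((FreeGroup.of (sX A) ^ k₀)⁻¹) * FreeGroup.mk (tXL A v k₀) *
      ((FreeGroup.of (sX A) ^ k₀)⁻¹)⁻¹ = FreeGroup.mk (qXL A v) := by
    rw [tXL_conj]; group
  rwa [h3] at h2

include hc in
theorem ncl_relSet :
    Subgroup.normalClosure (relSet (A := A) c) =
      Subgroup.normalClosure ((fun v => FreeGroup.mk (qXL A v)) '' L) := by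
  apply le_antisymm
  · haveI : (Subgroup.normalClosure ((fun v => FreeGroup.mk (qXL A v)) '' L)).Normal :=
      Subgroup.normalClosure_normal
    apply Subgroup.normalClosure_le_normal
    rintro w ⟨v, k, h1, h2, rfl⟩
    have hvL : v ∈ L := (hc v).2 ⟨k, h1⟩
    have hq : FreeGroup.mk (qXL A v) ∈
        Subgroup.normalClosure ((fun v => FreeGroup.mk (qXL A v)) '' L) :=
      Subgroup.subset_normalClosure (Set.mem_image_of_mem _ hvL)
    have := Subgroup.Normal.conj_mem ‹_› _ hq (FreeGroup.of (sX A) ^ k)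
    rwa [← tXL_conj] at this
  · haveI : (Subgroup.normalClosure (relSet (A := A) c)).Normal :=
      Subgroup.normalClosure_normal
    apply Subgroup.normalClosure_le_normal
    rintro _ ⟨v, hv, rfl⟩
    exact qXL_mem_ncl_relSet hc hv

include hc in
theorem mem_ncl_relSet_iff (u : List A) :
    FreeGroup.mk (qXL A u) ∈ Subgroup.normalClosure (relSet (A := A) c) ↔ u ∈ L := by
  rw [ncl_relSet hc]
  exact key_lemma L u

theorem mu_injective : Function.Injective (fun u : List A => FreeGroup.mk (qXL A u)) := by
  intro u v h
  simp only at h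
  have h1 : FreeGroup.mk (qXL A u) ∈
      Subgroup.normalClosure ((fun w => FreeGroup.mk (qXL A w)) '' ({v} : Set (List A))) := by
    rw [h]
    exact Subgroup.subset_normalClosure (Set.mem_image_of_mem _ rfl)
  exact (key_lemma {v} u).1 h1

include hc in
theorem minimal_relSet :
    ∀ R' ⊆ relSet (A := A) c,
      Subgroup.normalClosure R' = Subgroup.normalClosure (relSet (A := A) c) →
        R' = relSet (A := A) c := by
  intro R' hsub heq
  refine Set.Subset.antisymm hsub ?_
  intro w hw
  by_contra hw'
  rcases hw with ⟨v, k, h1, h2, rfl⟩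
  have hvL : v ∈ L := (hc v).2 ⟨k, h1⟩
  haveI : (Subgroup.normalClosure
      ((fun v' => FreeGroup.mk (qXL A v')) '' (L \ {v}))).Normal :=
    Subgroup.normalClosure_normal
  have hR'le : Subgroup.normalClosure R' ≤
      Subgroup.normalClosure ((fun v' => FreeGroup.mk (qXL A v')) '' (L \ {v})) := by
    apply Subgroup.normalClosure_le_normal
    intro w' hw'2
    rcases hsub hw'2 with ⟨v', k', h1', h2', rfl⟩
    have hne : v' ≠ v := by
      rintro rfl
      have hkk : k' = k := by
        rcases lt_trichotomy k' k with hlt | he | hgt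
        · have := h2 k' hlt
          rw [h1'] at this
          exact absurd this (by simp)
        · exact he
        · have := h2' k hgt
          rw [h1] at this
          exact absurd this (by simp)
      subst hkk
      exact hw' hw'2
    have hv'L : v' ∈ L := (hc v').2 ⟨k', h1'⟩
    have hq : FreeGroup.mk (qXL A v') ∈
        Subgroup.normalClosure ((fun v' => FreeGroup.mk (qXL A v')) '' (L \ {v})) :=
      Subgroup.subset_normalClosure (Set.mem_image_of_mem _ ⟨hv'L, hne⟩)
    have := Subgroup.Normal.conj_mem ‹_› _ hq (FreeGroup.of (sX A) ^ k')
    rwa [← tXL_conj] at this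
  have hqv : FreeGroup.mk (qXL A v) ∈ Subgroup.normalClosure R' := by
    rw [heq]
    exact qXL_mem_ncl_relSet hc hvL
  have := (key_lemma (L \ {v}) v).1 (hR'le hqv)
  exact this.2 rfl

theorem mem_relSet_iff (l : List (Fin (Fintype.card A + 2) × Bool)) :
    FreeGroup.mk l ∈ relSet (A := A) c ↔
      ∃ (v : List A) (k : ℕ), (Code.evaln k c (Encodable.encode v)).isSome = true ∧
        (∀ j < k, (Code.evaln j c (Encodable.encode v)).isSome = false) ∧
        FreeGroup.reduce l = tXL A v k := by
  constructor
  · rintro ⟨v, k, h1, h2, he⟩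
    refine ⟨v, k, h1, h2, ?_⟩
    have := (mk_eq_mk_iff_of_reduced (l := l) (l' := tXL A v k)
      (reduce_eq_self_of_chain _ (chain'_tXL v k))).1 he
    exact this
  · rintro ⟨v, k, h1, h2, he⟩
    refine ⟨v, k, h1, h2, ?_⟩
    exact (mk_eq_mk_iff_of_reduced (reduce_eq_self_of_chain _ (chain'_tXL v k))).2 he

end Case2Math
section Case2Prim

open Nat.Partrec (Code)

theorem primrec_invRev {β : Type*} [Primcodable β] :
    Primrec (FreeGroup.invRev : List (β × Bool) → List (β × Bool)) := by
  have hmap : Primrec fun l : List (β × Bool) => l.map (fun x => (x.1, !x.2)) :=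
    Primrec.list_map Primrec.id
      ((Primrec.fst.comp Primrec.snd).pair (primrec_bnot.comp (Primrec.snd.comp Primrec.snd))).to₂
  exact (Primrec.list_reverse.comp hmap).of_eq fun l => rfl

variable {A : Type} [Fintype A] [Primcodable A]

theorem primrec_wYL : Primrec (wYL A) := by
  haveI := Encodable.decidableEqOfEncodable A
  have := Primrec.list_map (Primrec.id (α := List A))
    ((primrec_of_fintype (fun a : A => (ltrY A a, true))).comp Primrec.snd).to₂
  exact this.of_eq fun u => rfl

theorem primrec_xYL : Primrec (xYL A) := by
  have h := Primrec.list_append.comp primrec_wYL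
    (Primrec.list_append.comp (Primrec.const [(cY A, true)])
      (primrec_invRev.comp primrec_wYL))
  exact h.of_eq fun u => rfl

theorem primrec_xXL : Primrec (xXL A) := by
  haveI := Encodable.decidableEqOfEncodable A
  have h := Primrec.list_map primrec_xYL
    (((primrec_of_fintype (fun i : Fin (Fintype.card A + 1) => (i.castSucc : Fin (Fintype.card A + 2)))).comp
        (Primrec.fst.comp Primrec.snd)).pair (Primrec.snd.comp Primrec.snd)).to₂
  exact h.of_eq fun u => rfl

theorem primrec_qXL : Primrec (qXL A) := by
  have h := Primrec.list_append.comp primrec_xXL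
    (Primrec.list_append.comp (Primrec.const [(sX A, true)])
      (Primrec.list_append.comp (primrec_invRev.comp primrec_xXL)
        (Primrec.const [(sX A, false)])))
  exact h.of_eq fun u => rfl

theorem replicate_eq_map_range {β : Type*} (k : ℕ) (x : β) :
    (List.range k).map (fun _ => x) = List.replicate k x := by
  refine List.eq_replicate_iff.2 ⟨by simp, by simp⟩

theorem primrec_replicate {β : Type*} [Primcodable β] (x : β) :
    Primrec (fun k => List.replicate k x) := by
  have h := Primrec.list_map Primrec.list_range
    ((Primrec.const x).comp (Primrec.fst (α := ℕ) (β := ℕ))).to₂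
  exact h.of_eq fun k => replicate_eq_map_range k x

theorem primrec_tXL : Primrec₂ (tXL A) := by
  have h : Primrec fun p : List A × ℕ =>
      List.replicate p.2 (sX A, true) ++ (qXL A p.1 ++ List.replicate p.2 (sX A, false)) :=
    Primrec.list_append.comp ((primrec_replicate (sX A, true)).comp Primrec.snd)
      (Primrec.list_append.comp (primrec_qXL.comp Primrec.fst)
        ((primrec_replicate (sX A, false)).comp Primrec.snd))
  exact h.of_eq fun p => rfl

/-- the Boolean relator-membership test -/
noncomputable def relBool (c : Code) (l : List (Fin (Fintype.card A + 2) × Bool)) : Bool :=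
  (List.range ((FreeGroup.reduce l).length + 1)).any fun k =>
    (wordsUpTo (Finset.univ.toList (α := A)) (FreeGroup.reduce l).length).any fun v =>
      (Code.evaln k c (Encodable.encode v)).isSome &&
        ((List.range k).all fun j => !(Code.evaln j c (Encodable.encode v)).isSome) &&
        decide (FreeGroup.reduce l = tXL A v k)

theorem primrec_relBool (c : Code) : Primrec (relBool (A := A) c) := by
  haveI := Encodable.decidableEqOfEncodable A
  have hred : Primrec (FreeGroup.reduce : List (Fin (Fintype.card A + 2) × Bool) → _) :=
    primrec_reduce
  have hlen : Primrec fun l : List (Fin (Fintype.card A + 2) × Bool) =>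
      (FreeGroup.reduce l).length := Primrec.list_length.comp hred
  have hk : Primrec fun q : (List (Fin (Fintype.card A + 2) × Bool) × ℕ) × List A =>
      q.1.2 := Primrec.snd.comp Primrec.fst
  have hv : Primrec fun q : (List (Fin (Fintype.card A + 2) × Bool) × ℕ) × List A =>
      q.2 := Primrec.snd
  have hev : Primrec fun q : (List (Fin (Fintype.card A + 2) × Bool) × ℕ) × List A =>
      (Code.evaln q.1.2 c (Encodable.encode q.2)).isSome :=
    Primrec.option_isSome.comp (Code.primrec_evaln.comp
      ((hk.pair (Primrec.const c)).pair (Primrec.encode.comp hv)))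
  have hall : Primrec fun q : (List (Fin (Fintype.card A + 2) × Bool) × ℕ) × List A =>
      (List.range q.1.2).all fun j => !(Code.evaln j c (Encodable.encode q.2)).isSome := by
    refine primrec_list_all (Primrec.list_range.comp hk) ?_
    exact primrec_bnot.comp (Primrec.option_isSome.comp (Code.primrec_evaln.comp
      (((Primrec.snd.pair (Primrec.const c))).pair
        (Primrec.encode.comp (Primrec.snd.comp Primrec.fst)))))
  have heq : Primrec fun q : (List (Fin (Fintype.card A + 2) × Bool) × ℕ) × List A =>
      decide (FreeGroup.reduce q.1.1 = tXL A q.2 q.1.2) :=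
    (Primrec.eq.comp (hred.comp (Primrec.fst.comp Primrec.fst)) (primrec_tXL.comp hv hk)).decide
  have hbody : Primrec fun q : (List (Fin (Fintype.card A + 2) × Bool) × ℕ) × List A =>
      ((Code.evaln q.1.2 c (Encodable.encode q.2)).isSome &&
        ((List.range q.1.2).all fun j => !(Code.evaln j c (Encodable.encode q.2)).isSome)) &&
        decide (FreeGroup.reduce q.1.1 = tXL A q.2 q.1.2) := by
    refine (Primrec.cond (Primrec.cond hev hall (Primrec.const false)) heq
      (Primrec.const false)).of_eq fun q => ?_
    cases h1 : (Code.evaln q.1.2 c (Encodable.encode q.2)).isSome <;>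
      cases h2 : (List.range q.1.2).all fun j => !(Code.evaln j c (Encodable.encode q.2)).isSome <;>
      simp [h1, h2]
  have hmid : Primrec fun p : List (Fin (Fintype.card A + 2) × Bool) × ℕ =>
      (wordsUpTo (Finset.univ.toList (α := A)) (FreeGroup.reduce p.1).length).any fun v =>
        ((Code.evaln p.2 c (Encodable.encode v)).isSome &&
          ((List.range p.2).all fun j => !(Code.evaln j c (Encodable.encode v)).isSome)) &&
          decide (FreeGroup.reduce p.1 = tXL A v p.2) := by
    refine primrec_list_any ((primrec_wordsUpTo _).comp (hlen.comp Primrec.fst)) ?_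
    exact hbody
  have houter : Primrec fun l : List (Fin (Fintype.card A + 2) × Bool) =>
      (List.range ((FreeGroup.reduce l).length + 1)).any fun k =>
        (wordsUpTo (Finset.univ.toList (α := A)) (FreeGroup.reduce l).length).any fun v =>
          ((Code.evaln k c (Encodable.encode v)).isSome &&
            ((List.range k).all fun j => !(Code.evaln j c (Encodable.encode v)).isSome)) &&
            decide (FreeGroup.reduce l = tXL A v k) := by
    refine primrec_list_any (Primrec.list_range.comp (Primrec.succ.comp hlen)) ?_
    exact hmid
  exact houter.of_eq fun l => by rfl

end Case2Prim
section Correctness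

open Nat.Partrec (Code)

variable {A : Type} [Fintype A] [Primcodable A]

theorem relBool_iff (c : Code) (l : List (Fin (Fintype.card A + 2) × Bool)) :
    relBool (A := A) c l = true ↔ FreeGroup.mk l ∈ relSet (A := A) c := by
  rw [mem_relSet_iff]
  unfold relBool
  simp only [List.any_eq_true, List.all_eq_true, List.mem_range, Bool.and_eq_true,
    decide_eq_true_eq, Bool.not_eq_true']
  constructor
  · rintro ⟨k, hk, v, hv, ⟨⟨h1, h2⟩, h3⟩⟩
    exact ⟨v, k, h1, fun j hj => h2 j hj, h3⟩
  · rintro ⟨v, k, h1, h2, h3⟩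
    have hlenr : (FreeGroup.reduce l).length = 2 * k + (4 * v.length + 4) := by
      rw [h3, length_tXL]
    refine ⟨k, ?_, v, ?_, ⟨⟨h1, fun j hj => h2 j hj⟩, h3⟩⟩
    · omega
    · refine mem_wordsUpTo _ (fun a => by simp) _ v ?_
      omega

theorem primrec_wXL : Primrec (wXL A) := by
  haveI := Encodable.decidableEqOfEncodable A
  have := Primrec.list_map (Primrec.id (α := List A))
    ((primrec_of_fintype (fun a : A => (ltrX A a, true))).comp Primrec.snd).to₂
  exact this.of_eq fun u => rfl

theorem primrec_cpL : Primrec (cpL A) := by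
  have h := Primrec.list_append.comp primrec_wXL
    (Primrec.list_append.comp (Primrec.const [(sX A, true)])
      (primrec_invRev.comp primrec_wXL))
  exact h.of_eq fun u => rfl

theorem primrec_cnL : Primrec (cnL A) := by
  have h := Primrec.list_cons.comp (Primrec.const (cX A, true)) primrec_wXL
  exact h.of_eq fun u => rfl

theorem primrec_filter_ne_sX :
    Primrec (fun l : List (Fin (Fintype.card A + 2) × Bool) =>
      l.filter fun p => p.1 ≠ sX A) := by
  have hinner : Primrec fun x : List (Fin (Fintype.card A + 2) × Bool) ×
      (Fin (Fintype.card A + 2) × Bool) =>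
      (if x.2.1 ≠ sX A then [x.2] else [] : List (Fin (Fintype.card A + 2) × Bool)) := by
    refine Primrec.ite ?_ ?_ (Primrec.const [])
    · exact (PrimrecPred.not (Primrec.eq.comp (Primrec.fst.comp Primrec.snd)
        (Primrec.const (sX A))))
    · exact Primrec.list_cons.comp Primrec.snd (Primrec.const [])
  have h := Primrec.list_flatMap (Primrec.id
    (α := List (Fin (Fintype.card A + 2) × Bool))) hinner.to₂
  refine h.of_eq fun l => ?_
  rw [filter_eq_flatMap]
  simp only [id]
  congr 1
  funext x
  by_cases hx : x.1 = sX A <;> simp [hx]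

theorem case1_wpBool_iff (l : List (Fin (Fintype.card A + 2) × Bool)) :
    decide (FreeGroup.reduce (l.filter fun p => p.1 ≠ sX A) = []) = true ↔
      FreeGroup.mk l ∈ Subgroup.normalClosure {FreeGroup.of (sX A)} := by
  rw [mem_ncl_sX_iff, decide_eq_true_eq]

theorem primrec_case1_wpBool :
    Primrec fun l : List (Fin (Fintype.card A + 2) × Bool) =>
      decide (FreeGroup.reduce (l.filter fun p => p.1 ≠ sX A) = []) := by
  haveI := Encodable.decidableEqOfEncodable A
  exact (Primrec.eq.comp (primrec_reduce.comp primrec_filter_ne_sX) (Primrec.const [])).decide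

theorem case1_relBool_iff (l : List (Fin (Fintype.card A + 2) × Bool)) :
    decide (FreeGroup.reduce l = [(sX A, true)]) = true ↔
      FreeGroup.mk l ∈ ({FreeGroup.of (sX A)} :
        Set (FreeGroup (Fin (Fintype.card A + 2)))) := by
  rw [decide_eq_true_eq, Set.mem_singleton_iff, ← mk_singleton_true]
  exact (mk_eq_mk_iff_of_reduced (FreeGroup.reduce_singleton _)).symm

theorem primrec_case1_relBool :
    Primrec fun l : List (Fin (Fintype.card A + 2) × Bool) =>
      decide (FreeGroup.reduce l = [(sX A, true)]) := by
  haveI := Encodable.decidableEqOfEncodable A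
  exact (Primrec.eq.comp primrec_reduce (Primrec.const _)).decide

end Correctness
section Glue

open Nat.Partrec (Code)

theorem wordLength_mk_le {X : Type*} (l : List (X × Bool)) :
    wordLength (FreeGroup.mk l) ≤ l.length := by
  unfold wordLength
  exact @FreeGroup.norm_mk_le X l (Classical.decEq X)

theorem wps_imp_cp {m : ℕ} {A : Type} [Fintype A] [Primcodable A] (L : Set (List A))
    (R : Set (FreeGroup (Fin m))) (μ' : List A → List (Fin m × Bool))
    (hμ' : Computable μ')
    (hiff : ∀ u, FreeGroup.mk (μ' u) ∈ Subgroup.normalClosure R ↔ u ∈ L)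
    (h : WordProblemSolvable R) : ComputablePred fun u : List A => u ∈ L := by
  obtain ⟨f, hf, hfe⟩ := ComputablePred.computable_iff.1 h
  refine ComputablePred.computable_iff.2 ⟨fun u => f (μ' u), hf.comp hμ', ?_⟩
  funext u
  apply propext
  rw [← hiff u]
  exact iff_of_eq (congrFun hfe (μ' u))

theorem case_decidable (A : Type) [Fintype A] [Primcodable A] (L : Set (List A))
    (hCP : ComputablePred fun u : List A => u ∈ L) :
    ∃ (m : ℕ) (R : Set (FreeGroup (Fin m))) (C : ℕ) (μ : List A → FreeGroup (Fin m)),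
      DecidableRelators R ∧ MinimalPresentation R ∧
      1 ≤ C ∧
      Function.Injective μ ∧
      (∃ μ' : List A → List (Fin m × Bool),
        Computable μ' ∧ ∀ u, FreeGroup.mk (μ' u) = μ u) ∧
      (∀ u, wordLength (μ u) ≤ C * (u.length + 1)) ∧
      (∀ u, μ u ∈ Subgroup.normalClosure R ↔ u ∈ L) ∧
      (WordProblemSolvable R ↔ ComputablePred fun u : List A => u ∈ L) := by
  obtain ⟨f, hf, hfe⟩ := ComputablePred.computable_iff.1 hCP
  have hfu : ∀ u, u ∈ L ↔ f u = true := fun u => iff_of_eq (congrFun hfe u)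
  refine ⟨Fintype.card A + 2, {FreeGroup.of (sX A)}, 4,
    fun u => FreeGroup.mk (bif f u then cpL A u else cnL A u), ?_, ?_, ?_, ?_, ?_, ?_, ?_, ?_⟩
  · exact ComputablePred.computable_iff.2
      ⟨fun l => decide (FreeGroup.reduce l = [(sX A, true)]),
        primrec_case1_relBool.to_comp, funext fun l => (propext (case1_relBool_iff l)).symm⟩
  · intro R' hsub heq
    rcases Set.subset_singleton_iff_eq.1 hsub with rfl | rfl
    · exfalso
      have h1 : FreeGroup.of (sX A) ∈ Subgroup.normalClosure (∅ :
          Set (FreeGroup (Fin (Fintype.card A + 2)))) := by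
        rw [heq]
        exact Subgroup.subset_normalClosure rfl
      have h2 : Subgroup.normalClosure (∅ :
          Set (FreeGroup (Fin (Fintype.card A + 2)))) ≤ ⊥ :=
        Subgroup.normalClosure_le_normal (by simp)
      exact FreeGroup.of_ne_one _ (h2 h1)
    · rfl
  · norm_num
  · intro u v h
    simp only at h
    cases hu : f u <;> cases hv : f v <;> rw [hu, hv] at h <;> simp only [Bool.cond_true,
      Bool.cond_false] at h
    · exact cnL_injective (mk_inj_of_chain (chain'_cnL u) (chain'_cnL v) h)
    · exact absurd (mk_inj_of_chain (chain'_cnL u) (chain'_cpL v) h).symm (cpL_ne_cnL v u)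
    · exact absurd (mk_inj_of_chain (chain'_cpL u) (chain'_cnL v) h) (cpL_ne_cnL u v)
    · exact cpL_injective (mk_inj_of_chain (chain'_cpL u) (chain'_cpL v) h)
  · refine ⟨fun u => bif f u then cpL A u else cnL A u, ?_, fun u => rfl⟩
    exact Computable.cond hf primrec_cpL.to_comp primrec_cnL.to_comp
  · intro u
    refine le_trans (wordLength_mk_le _) ?_
    cases hu : f u <;> simp only [Bool.cond_true, Bool.cond_false]
    · rw [length_cnL]; omega
    · rw [length_cpL]; omega
  · intro u
    simp only []
    cases hu : f u <;> simp only [Bool.cond_true, Bool.cond_false]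
    · exact iff_of_false (cnL_not_mem_ncl u)
        (fun h => by rw [hfu u] at h; rw [hu] at h; exact Bool.false_ne_true h)
    · exact iff_of_true (cpL_mem_ncl u) ((hfu u).2 hu)
  · refine iff_of_true ?_ hCP
    exact ComputablePred.computable_iff.2
      ⟨fun l => decide (FreeGroup.reduce (l.filter fun p => p.1 ≠ sX A) = []),
        primrec_case1_wpBool.to_comp, funext fun l => (propext (case1_wpBool_iff l)).symm⟩

theorem case_undecidable (A : Type) [Fintype A] [Primcodable A] (L : Set (List A))
    (hL : CEPred fun u : List A => u ∈ L)
    (hnCP : ¬ComputablePred fun u : List A => u ∈ L) :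
    ∃ (m : ℕ) (R : Set (FreeGroup (Fin m))) (C : ℕ) (μ : List A → FreeGroup (Fin m)),
      DecidableRelators R ∧ MinimalPresentation R ∧
      1 ≤ C ∧
      Function.Injective μ ∧
      (∃ μ' : List A → List (Fin m × Bool),
        Computable μ' ∧ ∀ u, FreeGroup.mk (μ' u) = μ u) ∧
      (∀ u, wordLength (μ u) ≤ C * (u.length + 1)) ∧
      (∀ u, μ u ∈ Subgroup.normalClosure R ↔ u ∈ L) ∧
      (WordProblemSolvable R ↔ ComputablePred fun u : List A => u ∈ L) := by
  obtain ⟨c, hc⟩ := exists_code_of_ce L hL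
  have hiff : ∀ u, FreeGroup.mk (qXL A u) ∈
      Subgroup.normalClosure (relSet (A := A) c) ↔ u ∈ L := fun u => mem_ncl_relSet_iff hc u
  refine ⟨Fintype.card A + 2, relSet (A := A) c, 4,
    fun u => FreeGroup.mk (qXL A u), ?_, ?_, ?_, mu_injective, ?_, ?_, hiff, ?_⟩
  · exact ComputablePred.computable_iff.2
      ⟨relBool (A := A) c, (primrec_relBool c).to_comp,
        funext fun l => (propext (relBool_iff c l)).symm⟩
  · exact minimal_relSet hc
  · norm_num
  · exact ⟨qXL A, primrec_qXL.to_comp, fun u => rfl⟩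
  · intro u
    refine le_trans (wordLength_mk_le _) ?_
    rw [length_qXL]
    omega
  · constructor
    · exact wps_imp_cp L _ (qXL A) primrec_qXL.to_comp hiff
    · intro h
      exact absurd h hnCP

end Glue

/-- for every c.e. language `L ⊆ A*` over a finite alphabet `A` there is a
finitely generated decidable minimal presentation `P = ⟨X ∥ R⟩`, a constant `C ≥ 1` and
a computable injective map `μ : A* → F(X)` with `|μ(u)| ≤ C·(|u|+1)`, such that `μ(u)` is
trivial in `P` iff `u ∈ L`, and the word problem for `P` is solvable iff `L` is
decidable. -/
theorem simulation_exists :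
    ∀ (A : Type) [Fintype A] [Primcodable A] (L : Set (List A)),
      CEPred (fun u : List A => u ∈ L) →
      ∃ (m : ℕ) (R : Set (FreeGroup (Fin m))) (C : ℕ) (μ : List A → FreeGroup (Fin m)),
        DecidableRelators R ∧ MinimalPresentation R ∧
        1 ≤ C ∧
        Function.Injective μ ∧
        (∃ μ' : List A → List (Fin m × Bool),
          Computable μ' ∧ ∀ u, FreeGroup.mk (μ' u) = μ u) ∧
        (∀ u, wordLength (μ u) ≤ C * (u.length + 1)) ∧
        (∀ u, μ u ∈ Subgroup.normalClosure R ↔ u ∈ L) ∧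
        (WordProblemSolvable R ↔ ComputablePred fun u : List A => u ∈ L) := by
  intro A _ _ L hL
  by_cases h : ComputablePred fun u : List A => u ∈ L
  · exact case_decidable A L h
  · exact case_undecidable A L hL h
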